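/- For every C > 0 and γ ∈ (0,1) there exists C' = C'(C, γ) > 0 with the following property. Let t₀ > 0 and let K(t), for t ∈ (0, t₀), be nonempty compact subsets of ℝ^{n+1} such that for every t ∈ (0, t₀) and every τ with 0 < τ < γ·min(t, t₀ − t), both K(t + τ) and K(t − τ) are contained in the closed C√τ-neighborhood of K(t). Then for all t₁, t₂ with 0 < t₁ < t₂ < t₀ one has dist_H(K(t₁), K(t₂)) ≤ C'·√(t₂ − t₁). -/

import Mathlib

open MeasureTheory Metric Set
set_option maxHeartbeats 1000000

lemma myPairEdist {E : Type*} [PseudoEMetricSpace E] {A B : Set E} {r : ℝ}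
    (h1 : A ⊆ cthickening r B) (h2 : B ⊆ cthickening r A) :
    EMetric.hausdorffEdist A B ≤ ENNReal.ofReal r := by
  refine EMetric.hausdorffEdist_le_of_infEdist (fun x hx => ?_) (fun x hx => ?_)
  · exact mem_cthickening_iff.1 (h1 hx)
  · exact mem_cthickening_iff.1 (h2 hx)

lemma myChain {E : Type*} [PseudoEMetricSpace E] (K : ℕ → Set E) (D : ℕ → ℝ)
    (hD : ∀ k, 0 ≤ D k) :
    ∀ N : ℕ, (∀ k < N, EMetric.hausdorffEdist (K (k+1)) (K k) ≤ ENNReal.ofReal (D k)) →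
    EMetric.hausdorffEdist (K N) (K 0) ≤ ENNReal.ofReal (∑ k ∈ Finset.range N, D k) := by
  intro N
  induction N with
  | zero => intro _; simp; exact Metric.hausdorffEDist_self
  | succ N ih =>
    intro hstep
    have h1 := hstep N (by omega)
    have h2 := ih (fun k hk => hstep k (by omega))
    calc EMetric.hausdorffEdist (K (N+1)) (K 0)
        ≤ EMetric.hausdorffEdist (K (N+1)) (K N) + EMetric.hausdorffEdist (K N) (K 0) :=
          EMetric.hausdorffEdist_triangle
      _ ≤ ENNReal.ofReal (D N) + ENNReal.ofReal (∑ k ∈ Finset.range N, D k) := add_le_add h1 h2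
      _ = ENNReal.ofReal (∑ k ∈ Finset.range (N+1), D k) := by
          rw [← ENNReal.ofReal_add (hD N) (Finset.sum_nonneg fun k _ => hD k),
            Finset.sum_range_succ]; ring_nf

lemma mySqrtPow {x : ℝ} (hx : 0 ≤ x) (k : ℕ) : Real.sqrt (x ^ k) = (Real.sqrt x) ^ k := by
  induction k with
  | zero => simp
  | succ k ih => rw [pow_succ, pow_succ, Real.sqrt_mul (pow_nonneg hx k), ih]

/-- Iterating the two-sided clearing-out estimate: if each time slice `K t` moves by at most
`C√τ` in Hausdorff distance over (relatively small) time increments `τ`, both forward and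
backward in time, then the Hausdorff distance between any two slices is bounded by
`C'·√(t₂ - t₁)`. -/
theorem hausdorffDist_le_sqrt_time (n : ℕ) (C : ℝ) (hC : 0 < C)
    (γ : ℝ) (hγ : γ ∈ Set.Ioo (0 : ℝ) 1) :
    ∃ C' : ℝ, 0 < C' ∧
      ∀ t₀ : ℝ, 0 < t₀ →
      ∀ K : ℝ → Set (EuclideanSpace ℝ (Fin (n+1))),
        (∀ t ∈ Set.Ioo (0 : ℝ) t₀, (K t).Nonempty ∧ IsCompact (K t)) →
        (∀ t ∈ Set.Ioo (0 : ℝ) t₀, ∀ τ : ℝ, 0 < τ → τ < γ * min t (t₀ - t) →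
          K (t + τ) ⊆ cthickening (C * Real.sqrt τ) (K t) ∧
          K (t - τ) ⊆ cthickening (C * Real.sqrt τ) (K t)) →
        ∀ t₁ t₂ : ℝ, 0 < t₁ → t₁ < t₂ → t₂ < t₀ →
          hausdorffDist (K t₁) (K t₂) ≤ C' * Real.sqrt (t₂ - t₁) := by
  obtain ⟨hγ0, hγ1⟩ := hγ
  obtain ⟨ρ, hρdef⟩ : ∃ ρ : ℝ, ρ = 1 - γ/2 := ⟨_, rfl⟩
  have hρ0 : 0 < ρ := by rw [hρdef]; linarith
  have hρ1 : ρ < 1 := by rw [hρdef]; linarith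
  have hρhalf : 1/2 < ρ := by rw [hρdef]; linarith
  obtain ⟨r, hrdef⟩ : ∃ r : ℝ, r = Real.sqrt ρ := ⟨_, rfl⟩
  have hr0 : 0 ≤ r := hrdef ▸ Real.sqrt_nonneg _
  have hr1 : r < 1 := by
    rw [hrdef, show (1:ℝ) = Real.sqrt 1 by simp]
    exact Real.sqrt_lt_sqrt hρ0.le (by simpa using hρ1)
  have hrpos : 0 < 1 - r := by linarith
  obtain ⟨B, hBdef⟩ : ∃ B : ℝ, B = Real.sqrt (γ/2) / (1 - r) + 1 := ⟨_, rfl⟩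
  have hB1 : (1:ℝ) ≤ B := by
    have : 0 ≤ Real.sqrt (γ/2) / (1 - r) := div_nonneg (Real.sqrt_nonneg _) hrpos.le
    rw [hBdef]; linarith
  have hB0 : 0 < B := by linarith
  refine ⟨2 * C * B, mul_pos (by linarith) hB0, ?_⟩
  intro t₀ ht₀ K _hKc hK t₁ t₂ ht₁ h12 h2
  obtain ⟨δ, hδdef⟩ : ∃ δ : ℝ, δ = t₂ - t₁ := ⟨_, rfl⟩
  have hδ0 : 0 < δ := by rw [hδdef]; linarith
  obtain ⟨h, hhdef⟩ : ∃ h : ℝ, h = δ / 2 := ⟨_, rfl⟩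
  have hh0 : 0 < h := by rw [hhdef]; linarith
  have hht0 : t₂ = t₁ + 2*h := by rw [hhdef, hδdef]; ring
  have ht2pos : 0 < t₂ := lt_trans ht₁ h12
  have ht02 : 0 < t₀ - t₂ := by linarith
  -- choose N
  obtain ⟨N, hN⟩ := exists_pow_lt_of_lt_one
    (x := γ * min t₁ (min (t₀ - t₂) h) / h)
    (div_pos (mul_pos hγ0 (lt_min ht₁ (lt_min ht02 hh0))) hh0) hρ1
  have hNlt : h * ρ^N < γ * min t₁ (min (t₀ - t₂) h) := by
    have := (lt_div_iff₀ hh0).1 hN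
    linarith [this]
  have hτf1' : h * ρ^N < γ * t₁ :=
    lt_of_lt_of_le hNlt (mul_le_mul_of_nonneg_left (min_le_left _ _) hγ0.le)
  have hτf2' : h * ρ^N < γ * (t₀ - t₂) :=
    lt_of_lt_of_le hNlt (mul_le_mul_of_nonneg_left
      (le_trans (min_le_right _ _) (min_le_left _ _)) hγ0.le)
  have hτfh' : h * ρ^N < γ * h :=
    lt_of_lt_of_le hNlt (mul_le_mul_of_nonneg_left
      (le_trans (min_le_right _ _) (min_le_right _ _)) hγ0.le)
  have minlt : ∀ x a b : ℝ, x < γ*a → x < γ*b → x < γ * min a b := by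
    intro x a b ha hb
    rcases le_total a b with hab | hab
    · rwa [min_eq_left hab]
    · rwa [min_eq_right hab]
  have lemA : ∀ a Z : ℝ, a < 2*Z → a * (γ/2) < γ * Z := by
    intro a Z hZ
    nlinarith [mul_pos hγ0 (show 0 < 2*Z - a by linarith)]
  have hpk : ∀ k : ℕ, 0 < ρ^k := fun k => pow_pos hρ0 k
  have hpk1 : ∀ k : ℕ, ρ^k ≤ 1 := fun k => pow_le_one₀ hρ0.le hρ1.le
  have hpkN : 0 < ρ^N := hpk N
  have hpkN1 : ρ^N ≤ 1 := hpk1 N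
  -- common step radius
  obtain ⟨S, hSdef⟩ : ∃ S : ℝ, S = C * Real.sqrt (h * (γ/2)) := ⟨_, rfl⟩
  have hS0 : 0 ≤ S := by rw [hSdef]; exact mul_nonneg hC.le (Real.sqrt_nonneg _)
  have hsqrtτ : ∀ k : ℕ, C * Real.sqrt (h * ρ^k * (γ/2)) = S * r^k := by
    intro k
    rw [hSdef, hrdef, show h * ρ^k * (γ/2) = (h*(γ/2)) * ρ^k by ring,
      Real.sqrt_mul (by nlinarith), mySqrtPow hρ0.le, mul_assoc]
  -- side 1 steps
  have step1 : ∀ k : ℕ, EMetric.hausdorffEdist (K (t₁ + h * ρ^(k+1))) (K (t₁ + h * ρ^k))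
      ≤ ENNReal.ofReal (S * r^k) := by
    intro k
    have hk0 := hpk k
    have hk1 := hpk1 k
    have hsucc : ρ^(k+1) = ρ^k * ρ := pow_succ ρ k
    obtain ⟨τ, hτdef⟩ : ∃ τ : ℝ, τ = h * ρ^k * (γ/2) := ⟨_, rfl⟩
    have hτ0 : 0 < τ := by rw [hτdef]; exact mul_pos (mul_pos hh0 hk0) (by linarith)
    have ha0 : 0 < h * ρ^k := mul_pos hh0 hk0
    have hb0 : 0 < h * (ρ^k * ρ) := mul_pos hh0 (mul_pos hk0 hρ0)
    have hah : h * ρ^k ≤ h := mul_le_of_le_one_right hh0.le hk1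
    have hba : h * (ρ^k * ρ) ≤ h * ρ^k :=
      mul_le_mul_of_nonneg_left (mul_le_of_le_one_right hk0.le hρ1.le) hh0.le
    have hhalf : h * ρ^k / 2 < h * (ρ^k * ρ) := by
      nlinarith [mul_lt_mul_of_pos_left hρhalf ha0]
    have hskI : t₁ + h * ρ^k ∈ Set.Ioo (0:ℝ) t₀ := by
      constructor
      · linarith
      · linarith
    have hsk1I : t₁ + h * ρ^(k+1) ∈ Set.Ioo (0:ℝ) t₀ := by
      rw [hsucc]
      constructor
      · linarith
      · linarith
    have hc1 : τ < γ * min (t₁ + h * ρ^k) (t₀ - (t₁ + h * ρ^k)) := by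
      rw [hτdef]
      apply minlt
      · exact lemA _ _ (by linarith)
      · exact lemA _ _ (by linarith)
    have hc2 : τ < γ * min (t₁ + h * ρ^(k+1)) (t₀ - (t₁ + h * ρ^(k+1))) := by
      rw [hτdef, hsucc]
      apply minlt
      · exact lemA _ _ (by linarith)
      · exact lemA _ _ (by linarith)
    have hb := (hK _ hskI τ hτ0 hc1).2
    have hf := (hK _ hsk1I τ hτ0 hc2).1
    have e1 : t₁ + h * ρ^k - τ = t₁ + h * ρ^(k+1) := by
      rw [hsucc]; simp only [hτdef, hρdef]; ring
    have e2 : t₁ + h * ρ^(k+1) + τ = t₁ + h * ρ^k := by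
      rw [hsucc]; simp only [hτdef, hρdef]; ring
    rw [e1] at hb
    rw [e2] at hf
    rw [← hsqrtτ k, ← hτdef]
    exact myPairEdist hb hf
  have chain1 := myChain (fun k => K (t₁ + h * ρ^k)) (fun k => S * r^k)
    (fun k => mul_nonneg hS0 (pow_nonneg hr0 k)) N (fun k _ => step1 k)
  simp only [pow_zero, mul_one] at chain1
  -- side 2 steps
  have step2 : ∀ k : ℕ, EMetric.hausdorffEdist (K (t₂ - h * ρ^(k+1))) (K (t₂ - h * ρ^k))
      ≤ ENNReal.ofReal (S * r^k) := by
    intro k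
    have hk0 := hpk k
    have hk1 := hpk1 k
    have hsucc : ρ^(k+1) = ρ^k * ρ := pow_succ ρ k
    obtain ⟨τ, hτdef⟩ : ∃ τ : ℝ, τ = h * ρ^k * (γ/2) := ⟨_, rfl⟩
    have hτ0 : 0 < τ := by rw [hτdef]; exact mul_pos (mul_pos hh0 hk0) (by linarith)
    have ha0 : 0 < h * ρ^k := mul_pos hh0 hk0
    have hb0 : 0 < h * (ρ^k * ρ) := mul_pos hh0 (mul_pos hk0 hρ0)
    have hah : h * ρ^k ≤ h := mul_le_of_le_one_right hh0.le hk1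
    have hba : h * (ρ^k * ρ) ≤ h * ρ^k :=
      mul_le_mul_of_nonneg_left (mul_le_of_le_one_right hk0.le hρ1.le) hh0.le
    have hhalf : h * ρ^k / 2 < h * (ρ^k * ρ) := by
      nlinarith [mul_lt_mul_of_pos_left hρhalf ha0]
    have hukI : t₂ - h * ρ^k ∈ Set.Ioo (0:ℝ) t₀ := by
      constructor
      · linarith
      · linarith
    have huk1I : t₂ - h * ρ^(k+1) ∈ Set.Ioo (0:ℝ) t₀ := by
      rw [hsucc]
      constructor
      · linarith
      · linarith
    have hc1 : τ < γ * min (t₂ - h * ρ^k) (t₀ - (t₂ - h * ρ^k)) := by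
      rw [hτdef]
      apply minlt
      · exact lemA _ _ (by linarith)
      · exact lemA _ _ (by linarith)
    have hc2 : τ < γ * min (t₂ - h * ρ^(k+1)) (t₀ - (t₂ - h * ρ^(k+1))) := by
      rw [hτdef, hsucc]
      apply minlt
      · exact lemA _ _ (by linarith)
      · exact lemA _ _ (by linarith)
    have hf := (hK _ hukI τ hτ0 hc1).1
    have hb := (hK _ huk1I τ hτ0 hc2).2
    have e1 : t₂ - h * ρ^k + τ = t₂ - h * ρ^(k+1) := by
      rw [hsucc]; simp only [hτdef, hρdef]; ring
    have e2 : t₂ - h * ρ^(k+1) - τ = t₂ - h * ρ^k := by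
      rw [hsucc]; simp only [hτdef, hρdef]; ring
    rw [e1] at hf
    rw [e2] at hb
    rw [← hsqrtτ k, ← hτdef]
    exact myPairEdist hf hb
  have chain2 := myChain (fun k => K (t₂ - h * ρ^k)) (fun k => S * r^k)
    (fun k => mul_nonneg hS0 (pow_nonneg hr0 k)) N (fun k _ => step2 k)
  simp only [pow_zero, mul_one] at chain2
  have hmeq : t₂ - h = t₁ + h := by rw [hht0]; ring
  rw [hmeq] at chain2
  -- bound the geometric sum
  have hgeom : ∑ k ∈ Finset.range N, S * r^k ≤ S * (1 / (1 - r)) := by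
    rw [← Finset.mul_sum]
    apply mul_le_mul_of_nonneg_left _ hS0
    rw [geom_sum_eq (ne_of_lt hr1)]
    have heq : (r^N - 1) / (r - 1) = (1 - r^N) / (1 - r) := by
      rw [← neg_div_neg_eq]; ring_nf
    rw [heq, div_le_div_iff₀ hrpos hrpos]
    nlinarith [pow_nonneg hr0 N]
  -- final jumps
  obtain ⟨τf, hτfdef⟩ : ∃ τf : ℝ, τf = h * ρ^N := ⟨_, rfl⟩
  have hτf0 : 0 < τf := by rw [hτfdef]; exact mul_pos hh0 hpkN
  have hτfle : τf ≤ h := hτfdef ▸ mul_le_of_le_one_right hh0.le hpkN1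
  have hγτf : 0 < γ * τf := mul_pos hγ0 hτf0
  have hτf1 : τf < γ * t₁ := by rw [hτfdef]; exact hτf1'
  have hτf2 : τf < γ * (t₀ - t₂) := by rw [hτfdef]; exact hτf2'
  have hτfh : τf < γ * h := by rw [hτfdef]; exact hτfh'
  have ht₁I : t₁ ∈ Set.Ioo (0:ℝ) t₀ := ⟨ht₁, by linarith⟩
  have ht₂I : t₂ ∈ Set.Ioo (0:ℝ) t₀ := ⟨ht2pos, by linarith⟩
  have hsNI : t₁ + τf ∈ Set.Ioo (0:ℝ) t₀ := by
    constructor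
    · linarith
    · linarith
  have huNI : t₂ - τf ∈ Set.Ioo (0:ℝ) t₀ := by
    constructor
    · linarith
    · linarith
  -- side 1 final jump: between t₁ and t₁ + τf
  have jump1 : EMetric.hausdorffEdist (K t₁) (K (t₁ + τf))
      ≤ ENNReal.ofReal (C * Real.sqrt τf) := by
    have hc1 : τf < γ * min t₁ (t₀ - t₁) := by
      apply minlt
      · exact hτf1
      · nlinarith [mul_nonneg hγ0.le (show (0:ℝ) ≤ t₀ - t₁ - h by linarith)]
    have hc2 : τf < γ * min (t₁ + τf) (t₀ - (t₁ + τf)) := by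
      apply minlt
      · nlinarith [hγτf]
      · nlinarith [mul_nonneg hγ0.le (show (0:ℝ) ≤ t₀ - (t₁ + τf) - h by linarith)]
    have hf := (hK t₁ ht₁I τf hτf0 hc1).1
    have hb := (hK _ hsNI τf hτf0 hc2).2
    have e1 : t₁ + τf - τf = t₁ := by ring
    rw [e1] at hb
    exact myPairEdist hb hf
  -- side 2 final jump: between t₂ and t₂ - τf
  have jump2 : EMetric.hausdorffEdist (K t₂) (K (t₂ - τf))
      ≤ ENNReal.ofReal (C * Real.sqrt τf) := by
    have hc1 : τf < γ * min t₂ (t₀ - t₂) := by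
      apply minlt
      · nlinarith [mul_nonneg hγ0.le (show (0:ℝ) ≤ t₂ - h by linarith)]
      · exact hτf2
    have hc2 : τf < γ * min (t₂ - τf) (t₀ - (t₂ - τf)) := by
      apply minlt
      · nlinarith [mul_nonneg hγ0.le (show (0:ℝ) ≤ t₂ - τf - h by linarith)]
      · nlinarith [hγτf]
    have hb := (hK t₂ ht₂I τf hτf0 hc1).2
    have hf := (hK _ huNI τf hτf0 hc2).1
    have e1 : t₂ - τf + τf = t₂ := by ring
    rw [e1] at hf
    exact myPairEdist hf hb
  rw [← hτfdef] at chain1 chain2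
  -- put everything together
  have hsqh : Real.sqrt τf ≤ Real.sqrt h := Real.sqrt_le_sqrt hτfle
  have hCτf : C * Real.sqrt τf ≤ C * Real.sqrt h :=
    mul_le_mul_of_nonneg_left hsqh hC.le
  have side1 : EMetric.hausdorffEdist (K t₁) (K (t₁ + h))
      ≤ ENNReal.ofReal (C * Real.sqrt h * B) := by
    calc EMetric.hausdorffEdist (K t₁) (K (t₁ + h))
        ≤ EMetric.hausdorffEdist (K t₁) (K (t₁ + τf))
          + EMetric.hausdorffEdist (K (t₁ + τf)) (K (t₁ + h)) :=
          EMetric.hausdorffEdist_triangle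
      _ ≤ ENNReal.ofReal (C * Real.sqrt h)
          + ENNReal.ofReal (S * (1 / (1 - r))) := by
            apply add_le_add
            · exact le_trans jump1 (ENNReal.ofReal_le_ofReal hCτf)
            · exact le_trans chain1 (ENNReal.ofReal_le_ofReal hgeom)
      _ ≤ ENNReal.ofReal (C * Real.sqrt h * B) := by
            rw [← ENNReal.ofReal_add (mul_nonneg hC.le (Real.sqrt_nonneg _))
              (mul_nonneg hS0 (one_div_nonneg.mpr hrpos.le))]
            apply ENNReal.ofReal_le_ofReal
            have hSval : S = C * (Real.sqrt h * Real.sqrt (γ/2)) := by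
              rw [hSdef, Real.sqrt_mul hh0.le]
            rw [hSval, hBdef]
            have h1 : C * Real.sqrt h * (Real.sqrt (γ/2) / (1 - r) + 1)
                = C * Real.sqrt h + C * (Real.sqrt h * Real.sqrt (γ/2)) * (1/(1-r)) := by
              field_simp; ring
            rw [h1]
  have side2 : EMetric.hausdorffEdist (K t₂) (K (t₁ + h))
      ≤ ENNReal.ofReal (C * Real.sqrt h * B) := by
    calc EMetric.hausdorffEdist (K t₂) (K (t₁ + h))
        ≤ EMetric.hausdorffEdist (K t₂) (K (t₂ - τf))
          + EMetric.hausdorffEdist (K (t₂ - τf)) (K (t₁ + h)) :=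
          EMetric.hausdorffEdist_triangle
      _ ≤ ENNReal.ofReal (C * Real.sqrt h)
          + ENNReal.ofReal (S * (1 / (1 - r))) := by
            apply add_le_add
            · exact le_trans jump2 (ENNReal.ofReal_le_ofReal hCτf)
            · exact le_trans chain2 (ENNReal.ofReal_le_ofReal hgeom)
      _ ≤ ENNReal.ofReal (C * Real.sqrt h * B) := by
            rw [← ENNReal.ofReal_add (mul_nonneg hC.le (Real.sqrt_nonneg _))
              (mul_nonneg hS0 (one_div_nonneg.mpr hrpos.le))]
            apply ENNReal.ofReal_le_ofReal
            have hSval : S = C * (Real.sqrt h * Real.sqrt (γ/2)) := by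
              rw [hSdef, Real.sqrt_mul hh0.le]
            rw [hSval, hBdef]
            have h1 : C * Real.sqrt h * (Real.sqrt (γ/2) / (1 - r) + 1)
                = C * Real.sqrt h + C * (Real.sqrt h * Real.sqrt (γ/2)) * (1/(1-r)) := by
              field_simp; ring
            rw [h1]
  have total : EMetric.hausdorffEdist (K t₁) (K t₂)
      ≤ ENNReal.ofReal (2 * C * B * Real.sqrt δ) := by
    calc EMetric.hausdorffEdist (K t₁) (K t₂)
        ≤ EMetric.hausdorffEdist (K t₁) (K (t₁ + h))
          + EMetric.hausdorffEdist (K (t₁ + h)) (K t₂) :=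
          EMetric.hausdorffEdist_triangle
      _ ≤ ENNReal.ofReal (C * Real.sqrt h * B) + ENNReal.ofReal (C * Real.sqrt h * B) := by
          apply add_le_add side1
          rw [show EMetric.hausdorffEdist (K (t₁ + h)) (K t₂) = EMetric.hausdorffEdist (K t₂) (K (t₁ + h)) from Metric.hausdorffEDist_comm]
          exact side2
      _ ≤ ENNReal.ofReal (2 * C * B * Real.sqrt δ) := by
          have hCB : (0:ℝ) ≤ C * Real.sqrt h * B :=
            mul_nonneg (mul_nonneg hC.le (Real.sqrt_nonneg _)) hB0.le
          rw [← ENNReal.ofReal_add hCB hCB]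
          apply ENNReal.ofReal_le_ofReal
          have hsq : Real.sqrt h ≤ Real.sqrt δ := Real.sqrt_le_sqrt (by linarith)
          linarith [mul_le_mul_of_nonneg_left hsq (mul_nonneg hC.le hB0.le)]
  have hfinal : hausdorffDist (K t₁) (K t₂) ≤ 2 * C * B * Real.sqrt δ :=
    ENNReal.toReal_le_of_le_ofReal
      (mul_nonneg (mul_nonneg (by linarith) hB0.le) (Real.sqrt_nonneg _)) total
  rw [hδdef] at hfinal
  exact hfinal
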